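/- The width of the cusp a/c (gcd(a,c)=1) for the group Γ₁(N) equals 1 if N=4 and gcd(c,4)=2, and equals N/gcd(c,N) otherwise. -/

import Mathlib

private lemma e00 (a b c d h ε : ℤ) (hdet : a * d - b * c = 1) :
    (ε • (!![a, b; c, d] * !![1, h; 0, 1] * !![d, -b; -c, a])) 0 0 = ε * (1 - a*c*h) := by
  simp [Matrix.mul_fin_two, -mul_eq_mul_left_iff]
  linear_combination ε * hdet

private lemma e11 (a b c d h ε : ℤ) (hdet : a * d - b * c = 1) :
    (ε • (!![a, b; c, d] * !![1, h; 0, 1] * !![d, -b; -c, a])) 1 1 = ε * (1 + a*c*h) := by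
  simp [Matrix.mul_fin_two, -mul_eq_mul_left_iff]
  linear_combination ε * hdet

private lemma e10 (a b c d h ε : ℤ) :
    (ε • (!![a, b; c, d] * !![1, h; 0, 1] * !![d, -b; -c, a])) 1 0 = -(ε * (c*c*h)) := by
  simp [Matrix.mul_fin_two, -mul_eq_mul_left_iff]
  ring

private lemma cond_iff (N a b c d h ε : ℤ) (hdet : a * d - b * c = 1) :
    ((ε • (!![a, b; c, d] * !![1, h; 0, 1] * !![d, -b; -c, a])) 0 0 ≡ 1 [ZMOD N] ∧
     (ε • (!![a, b; c, d] * !![1, h; 0, 1] * !![d, -b; -c, a])) 1 1 ≡ 1 [ZMOD N] ∧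
     (ε • (!![a, b; c, d] * !![1, h; 0, 1] * !![d, -b; -c, a])) 1 0 ≡ 0 [ZMOD N]) ↔
    (N ∣ 1 - ε + ε * (a*c*h) ∧ N ∣ 1 - ε - ε * (a*c*h) ∧ N ∣ ε * (c*c*h)) := by
  rw [e00 a b c d h ε hdet, e11 a b c d h ε hdet, e10 a b c d h ε,
    Int.modEq_iff_dvd, Int.modEq_iff_dvd, Int.modEq_iff_dvd,
    (by ring : (1:ℤ) - ε*(1 - a*c*h) = 1 - ε + ε*(a*c*h)),
    (by ring : (1:ℤ) - ε*(1 + a*c*h) = 1 - ε - ε*(a*c*h)),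
    (by ring : (0:ℤ) - -(ε*(c*c*h)) = ε*(c*c*h))]

private lemma key_dvd (c N h : ℤ) (hN : N ≠ 0) (H : N ∣ c * h) : (N / Int.gcd c N) ∣ h := by
  set g : ℤ := (Int.gcd c N : ℤ) with hg
  have hgpos : 0 < Int.gcd c N := Int.gcd_pos_of_ne_zero_right c hN
  have hgz : g ≠ 0 := by positivity
  have hgN : g ∣ N := Int.gcd_dvd_right c N
  have hgc : g ∣ c := Int.gcd_dvd_left c N
  have hco : IsCoprime (c / g) (N / g) := by
    rw [Int.isCoprime_iff_gcd_eq_one]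
    exact Int.gcd_div_gcd_div_gcd hgpos
  have h2 : (N / g) ∣ (c / g) * h := by
    have e1 : g * (N / g) = N := Int.mul_ediv_cancel' hgN
    have e2 : g * ((c / g) * h) = c * h := by rw [← mul_assoc, Int.mul_ediv_cancel' hgc]
    rw [← mul_dvd_mul_iff_left hgz, e1, e2]
    exact H
  exact hco.symm.dvd_of_dvd_mul_left h2

private lemma dvd_of_gcd_one {c n h : ℤ} (hg : Int.gcd c n = 1) (H : n ∣ c*c*h) : n ∣ h := by
  have hco1 : IsCoprime c n := Int.isCoprime_iff_gcd_eq_one.mpr hg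
  exact ((hco1.mul_left hco1).symm).dvd_of_dvd_mul_left H

theorem cusp_width_Gamma1 (N : ℕ) (hN : 0 < N) (a b c d : ℤ)
    (hdet : a * d - b * c = 1) :
    IsLeast {h : ℕ | 0 < h ∧
      ∃ ε : ℤ, (ε = 1 ∨ ε = -1) ∧
        (let M := ε • (!![a, b; c, d] * !![1, (h : ℤ); 0, 1] * !![d, -b; -c, a]);
          M 0 0 ≡ 1 [ZMOD (N : ℤ)] ∧ M 1 1 ≡ 1 [ZMOD (N : ℤ)] ∧
            M 1 0 ≡ 0 [ZMOD (N : ℤ)])}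
      (if N = 4 ∧ Int.gcd c 4 = 2 then 1 else N / Int.gcd c N) := by
  have hNz : (N : ℤ) ≠ 0 := by exact_mod_cast hN.ne'
  constructor
  · -- membership
    split_ifs with hexc
    · -- exceptional case N = 4, gcd(c,4) = 2
      obtain ⟨h4, hg2⟩ := hexc
      subst h4
      have h2c : (2:ℤ) ∣ c := by
        have h1 := Int.gcd_dvd_left (a := c) (b := 4)
        rw [hg2] at h1
        exact_mod_cast h1
      have h4c : ¬ (4:ℤ) ∣ c := by
        intro hdc
        have h1 : (4:ℤ) ∣ (Int.gcd c 4 : ℤ) := Int.dvd_coe_gcd hdc ⟨1, rfl⟩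
        rw [hg2] at h1
        norm_num at h1
      obtain ⟨m, rfl⟩ := h2c
      have hmodd : ¬ (2:ℤ) ∣ m := fun ⟨t, ht⟩ => h4c ⟨t, by rw [ht]; ring⟩
      obtain ⟨t, rfl⟩ : Odd m := Int.not_even_iff_odd.mp (fun he => hmodd he.two_dvd)
      obtain ⟨s, rfl⟩ : Odd a := by
        rcases Int.even_or_odd a with ⟨s, hs⟩ | h
        · exfalso
          have h1 : (2:ℤ) ∣ 1 := ⟨s*d - b*(2*t+1), by linear_combination -hdet + d*hs⟩
          norm_num at h1
        · exact h
      refine ⟨Nat.one_pos, -1, Or.inr rfl,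
        (cond_iff ((4:ℕ):ℤ) _ _ _ _ _ _ hdet).mpr ⟨?_, ?_, ?_⟩⟩
      · exact ⟨-(2*s*t) - s - t, by push_cast; ring⟩
      · exact ⟨2*s*t + s + t + 1, by push_cast; ring⟩
      · exact ⟨-((2*t+1)*(2*t+1)), by push_cast; ring⟩
    · -- generic case
      have hgdvd : Int.gcd c (N:ℤ) ∣ N := by
        have h1 := Int.gcd_dvd_right (a := c) (b := (N:ℤ))
        exact_mod_cast h1
      have hgpos : 0 < Int.gcd c (N:ℤ) := Int.gcd_pos_of_ne_zero_right c hNz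
      have hgcZ : (Int.gcd c (N:ℤ) : ℤ) ∣ c := Int.gcd_dvd_left c (N:ℤ)
      have hgNZ : (Int.gcd c (N:ℤ) : ℤ) ∣ (N:ℤ) := Int.gcd_dvd_right c (N:ℤ)
      have hpos' : 0 < N / Int.gcd c (N:ℤ) := Nat.div_pos (Nat.le_of_dvd hN hgdvd) hgpos
      have e : ((N / Int.gcd c (N:ℤ) : ℕ) : ℤ) = (N:ℤ) / (Int.gcd c (N:ℤ) : ℤ) := by
        push_cast [Int.natCast_ediv]
        rfl
      have hkey : (N:ℤ) ∣ c * ((N / Int.gcd c (N:ℤ) : ℕ) : ℤ) := by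
        rw [e, ← Int.mul_ediv_assoc c hgNZ, mul_comm c (N:ℤ), Int.mul_ediv_assoc (N:ℤ) hgcZ]
        exact dvd_mul_right _ _
      obtain ⟨k, hk⟩ := hkey
      refine ⟨hpos', 1, Or.inl rfl,
        (cond_iff ((N:ℕ):ℤ) _ _ _ _ _ _ hdet).mpr ⟨?_, ?_, ?_⟩⟩
      · exact ⟨a * k, by linear_combination a * hk⟩
      · exact ⟨-(a * k), by linear_combination -(a * hk)⟩
      · exact ⟨c * k, by linear_combination c * hk⟩
  · -- lower bound
    rintro h ⟨hpos, ε, hε, hcond⟩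
    obtain ⟨H1, H2, H3⟩ := (cond_iff ((N:ℕ):ℤ) a b c d (h:ℤ) ε hdet).mp hcond
    split_ifs with hexc
    · exact hpos
    · -- goal : N / Int.gcd c N ≤ h
      rcases hε with rfl | rfl
      · -- ε = 1
        have hach : (N:ℤ) ∣ a*c*(h:ℤ) := by
          have h1 := H1
          rw [(by ring : (1:ℤ) - 1 + 1 * (a*c*(h:ℤ)) = a*c*(h:ℤ))] at h1
          exact h1
        have hcch : (N:ℤ) ∣ c*c*(h:ℤ) := by
          have h1 := H3
          rw [one_mul] at h1
          exact h1
        have hcoac : IsCoprime a c := ⟨d, -b, by linear_combination hdet⟩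
        obtain ⟨u, v, huv⟩ := hcoac
        have hch : (N:ℤ) ∣ c*(h:ℤ) := by
          have h1 : c*(h:ℤ) = u*(a*c*(h:ℤ)) + v*(c*c*(h:ℤ)) := by
            linear_combination -(c*(h:ℤ)) * huv
          rw [h1]
          exact dvd_add (hach.mul_left u) (hcch.mul_left v)
        have h2 := key_dvd c (N:ℤ) (h:ℤ) hNz hch
        have h3 : (N / Int.gcd c (N:ℤ) : ℕ) ∣ h := by
          rw [show ((N:ℤ) / (Int.gcd c (N:ℤ) : ℤ)) = ((N / Int.gcd c (N:ℤ) : ℕ) : ℤ) by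
            push_cast [Int.natCast_ediv]; rfl] at h2
          exact_mod_cast h2
        exact Nat.le_of_dvd hpos h3
      · -- ε = -1
        have h1' : (N:ℤ) ∣ 2 - a*c*(h:ℤ) := by
          have h1 := H1
          rw [(by ring : (1:ℤ) - (-1) + (-1) * (a*c*(h:ℤ)) = 2 - a*c*(h:ℤ))] at h1
          exact h1
        have h2' : (N:ℤ) ∣ 2 + a*c*(h:ℤ) := by
          have h1 := H2
          rw [(by ring : (1:ℤ) - (-1) - (-1) * (a*c*(h:ℤ)) = 2 + a*c*(h:ℤ))] at h1
          exact h1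
        have hcch : (N:ℤ) ∣ c*c*(h:ℤ) := by
          have h1 := H3
          rw [neg_one_mul] at h1
          exact (dvd_neg).mp h1
        have hN4 : N ∣ 4 := by
          have h1 : (N:ℤ) ∣ 4 := by
            rw [(by ring : (4:ℤ) = (2 - a*c*(h:ℤ)) + (2 + a*c*(h:ℤ)))]
            exact dvd_add h1' h2'
          exact_mod_cast h1
        have hNle : N ≤ 4 := Nat.le_of_dvd (by norm_num) hN4
        interval_cases N
        · -- N = 1
          exact le_trans (Nat.div_le_self 1 _) hpos
        · -- N = 2
          have htd : Int.gcd c ((2:ℕ):ℤ) ∣ 2 := by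
            have h1 := Int.gcd_dvd_right (a := c) (b := ((2:ℕ):ℤ))
            exact_mod_cast h1
          have h12 : Int.gcd c ((2:ℕ):ℤ) = 1 ∨ Int.gcd c ((2:ℕ):ℤ) = 2 := by
            have hle : Int.gcd c ((2:ℕ):ℤ) ≤ 2 := Nat.le_of_dvd (by norm_num) htd
            interval_cases (Int.gcd c ((2:ℕ):ℤ)) <;> omega
          rcases h12 with ht | ht
          · have hdh : ((2:ℕ):ℤ) ∣ (h:ℤ) := dvd_of_gcd_one ht hcch
            have hdh' : 2 ∣ h := by exact_mod_cast hdh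
            calc 2 / Int.gcd c ((2:ℕ):ℤ) ≤ 2 := Nat.div_le_self _ _
              _ ≤ h := Nat.le_of_dvd hpos hdh'
          · rw [ht]; omega
        · -- N = 3
          omega
        · -- N = 4
          have ht2 : Int.gcd c 4 ≠ 2 := fun hh => hexc ⟨rfl, hh⟩
          have htd : Int.gcd c ((4:ℕ):ℤ) ∣ 4 := by
            have h1 := Int.gcd_dvd_right (a := c) (b := ((4:ℕ):ℤ))
            exact_mod_cast h1
          have hcast : Int.gcd c ((4:ℕ):ℤ) = Int.gcd c 4 := by norm_num
          have h124 : Int.gcd c ((4:ℕ):ℤ) = 1 ∨ Int.gcd c ((4:ℕ):ℤ) = 4 := by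
            have hle : Int.gcd c ((4:ℕ):ℤ) ≤ 4 := Nat.le_of_dvd (by norm_num) htd
            rw [hcast] at *
            interval_cases (Int.gcd c 4) <;> omega
          rcases h124 with ht | ht
          · have hdh : ((4:ℕ):ℤ) ∣ (h:ℤ) := dvd_of_gcd_one ht hcch
            have hdh' : 4 ∣ h := by exact_mod_cast hdh
            rw [ht]
            calc 4 / 1 = 4 := by norm_num
              _ ≤ h := Nat.le_of_dvd hpos hdh'
          · rw [ht]; omega
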